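/- Let R be a commutative ring and let ℓ, m ≥ 1 and n ≥ 2 be integers. Let W ∈ R^{(ℓ+1)×(ℓ+1)} be invertible, let a ∈ R^{n−1}, A ∈ R^{ℓ×(n−1)}, s ∈ R^m, S ∈ R^{m×ℓ}, and let H ∈ R^{(ℓ+1)×n} be the block matrix whose first row is (1, aᵀ) and whose remaining ℓ rows are (0, A). Let M ∈ R^{n×n} and z ∈ Rⁿ satisfy M·z = e₁, where e₁ ∈ Rⁿ is the first standard basis vector. Define Y_s := [s | s·aᵀ + S·A] ∈ R^{m×n}, Ŝ := [s | S]·W⁻¹ ∈ R^{m×(ℓ+1)}, and Â := W·H·M·[Iₙ | z] ∈ R^{(ℓ+1)×(n+1)}. Then Ŝ·Â = [Y_s·M | s], i.e., the product equals the block matrix whose first n columns are Y_s·M and whose last column is s. -/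

import Mathlib

open Matrix

/-- The key algebraic identity `Ŝ·Â = [Y_s·M | s]`, where `Ŝ = [s | S]·W⁻¹`,
`Â = W·H·M·[Iₙ | z]`, `H` is the block matrix with first row `(1, aᵀ)` and remaining
rows `(0, A)`, `Y_s = [s | s·aᵀ + S·A]`, and `M·z = e₁`. The `n`-dimensional index set
is represented as `Fin 1 ⊕ Fin (n-1)` and the `(ℓ+1)`-dimensional one as `Fin 1 ⊕ Fin ℓ`. -/
theorem stmt_5 {R : Type*} [CommRing R] (ℓ m n : ℕ) (hℓ : 1 ≤ ℓ) (hm : 1 ≤ m) (hn : 2 ≤ n)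
    (W W' : Matrix (Fin 1 ⊕ Fin ℓ) (Fin 1 ⊕ Fin ℓ) R)
    (hW : W * W' = 1) (hW' : W' * W = 1)
    (a : Fin (n - 1) → R) (A : Matrix (Fin ℓ) (Fin (n - 1)) R)
    (s : Fin m → R) (S : Matrix (Fin m) (Fin ℓ) R)
    (M : Matrix (Fin 1 ⊕ Fin (n - 1)) (Fin 1 ⊕ Fin (n - 1)) R)
    (z : Fin 1 ⊕ Fin (n - 1) → R)
    (hMz : M.mulVec z = Sum.elim (fun _ => (1 : R)) (fun _ => (0 : R))) :
    let H : Matrix (Fin 1 ⊕ Fin ℓ) (Fin 1 ⊕ Fin (n - 1)) R :=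
      Matrix.fromBlocks (1 : Matrix (Fin 1) (Fin 1) R)
        (Matrix.of fun (_ : Fin 1) j => a j) (0 : Matrix (Fin ℓ) (Fin 1) R) A
    let Ys : Matrix (Fin m) (Fin 1 ⊕ Fin (n - 1)) R :=
      Matrix.fromCols (Matrix.of fun i (_ : Fin 1) => s i)
        (Matrix.of fun i j => s i * a j + (S * A) i j)
    let Shat : Matrix (Fin m) (Fin 1 ⊕ Fin ℓ) R :=
      (Matrix.fromCols (Matrix.of fun i (_ : Fin 1) => s i) S) * W'
    let Ahat : Matrix (Fin 1 ⊕ Fin ℓ) ((Fin 1 ⊕ Fin (n - 1)) ⊕ Fin 1) R :=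
      W * H * M *
        Matrix.fromCols (1 : Matrix (Fin 1 ⊕ Fin (n - 1)) (Fin 1 ⊕ Fin (n - 1)) R)
          (Matrix.of fun j (_ : Fin 1) => z j)
    Shat * Ahat = Matrix.fromCols (Ys * M) (Matrix.of fun i (_ : Fin 1) => s i) := by
  intro H Ys Shat Ahat
  have key : Shat * (W * H) = Ys := by
    calc Shat * (W * H) = Matrix.fromCols (Matrix.of fun i (_ : Fin 1) => s i) S * (W' * W) * H := by
          simp only [Shat, Matrix.mul_assoc]
      _ = Matrix.fromCols (Matrix.of fun i (_ : Fin 1) => s i) S * H := by rw [hW', Matrix.mul_one]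
      _ = Ys := by
          simp only [H, Ys, Matrix.fromCols_mul_fromBlocks, Matrix.mul_one, Matrix.mul_zero,
            add_zero]
          ext i (j | j) <;>
            simp [Matrix.mul_apply, Fin.sum_univ_one]
  have hA : Ahat = (W * H) * (M * Matrix.fromCols 1 (Matrix.of fun j (_ : Fin 1) => z j)) := by
    simp only [Ahat, Matrix.mul_assoc]
  rw [hA, ← Matrix.mul_assoc, key, ← Matrix.mul_assoc, Matrix.mul_fromCols, Matrix.mul_one]
  ext i (j | j)
  · simp
  have h1 : ((Ys * M) * Matrix.of fun j (_ : Fin 1) => z j) i j = ((Ys * M).mulVec z) i := by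
    simp [Matrix.mul_apply, Matrix.mulVec, dotProduct]
  rw [Matrix.fromCols_apply_inr, Matrix.fromCols_apply_inr, h1, ← Matrix.mulVec_mulVec, hMz]
  simp [Matrix.mulVec, dotProduct, Fintype.sum_sum_type, Ys]
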